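/- (False negative for a non-Markovian spin–spin dynamics) Consider the unital dynamics T(t) = diag(cos ωt, cos ωt, 1) with ω = 5/4, and take the antipodal pair r₁ = (1,0,0), r₂ = (-1,0,0) with bias p = 1/4, q = 3/4. The generalized trace distance of the evolved pair is D(t) = max(‖T(t)(p r₁ - q r₂)‖, |p-q|) = max(|cos ωt|, 1/2), and there exists a nondegenerate interval [a,b] ⊆ [0,∞) (e.g. any interval on which |cos ωt| < 1/2) such that D is constant, equal to 1/2, on [a,b], while the evolved Bloch vector t ↦ T(t)r₁ is non-constant on [a,b]. -/

import Mathlib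

noncomputable section

/-- The action of a qubit dynamical map, given by a real 3×3 matrix,
on Bloch vectors in ℝ³. -/
def act (T : Matrix (Fin 3) (Fin 3) ℝ) (r : EuclideanSpace ℝ (Fin 3)) :
    EuclideanSpace ℝ (Fin 3) :=
  WithLp.toLp 2 (T.mulVec r)

/-- The spin–spin dynamical map T(t) = diag(cos ωt, cos ωt, 1). -/
def Tss (ω t : ℝ) : Matrix (Fin 3) (Fin 3) ℝ :=
  Matrix.diagonal ![Real.cos (ω * t), Real.cos (ω * t), 1]

lemma act_apply (ω t : ℝ) (r : EuclideanSpace ℝ (Fin 3)) (i : Fin 3) :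
    act (Tss ω t) r i = ![Real.cos (ω * t), Real.cos (ω * t), 1] i * r i := by
  simp [act, Tss, Matrix.mulVec_diagonal]

/-- (False negative for a non-Markovian spin–spin dynamics.) For T(t) =
diag(cos ωt, cos ωt, 1) with ω = 5/4, the antipodal pair r₁ = (1,0,0), r₂ = (-1,0,0)
and bias p = 1/4, q = 3/4, the generalized trace distance of the evolved pair is
D(t) = max(|cos ωt|, 1/2), and there is a nondegenerate interval [a,b] ⊆ [0,∞) on which
D is constantly 1/2 while the evolved Bloch vector t ↦ T(t)r₁ is non-constant there. -/
theorem gblp_false_negative_spin_spin :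
    let ω : ℝ := 5 / 4
    let p : ℝ := 1 / 4
    let q : ℝ := 3 / 4
    let r₁ : EuclideanSpace ℝ (Fin 3) := WithLp.toLp 2 ![1, 0, 0]
    let r₂ : EuclideanSpace ℝ (Fin 3) := WithLp.toLp 2 ![-1, 0, 0]
    let D : ℝ → ℝ := fun t => max ‖act (Tss ω t) (p • r₁ - q • r₂)‖ |p - q|
    (∀ t : ℝ, D t = max |Real.cos (ω * t)| (1 / 2))
    ∧ ∃ a b : ℝ, 0 ≤ a ∧ a < b
        ∧ (∀ t ∈ Set.Icc a b, D t = 1 / 2)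
        ∧ ∃ t₁ ∈ Set.Icc a b, ∃ t₂ ∈ Set.Icc a b,
            act (Tss ω t₁) r₁ ≠ act (Tss ω t₂) r₁ := by
  intro ω p q r₁ r₂ D
  have hD : ∀ t : ℝ, D t = max |Real.cos (ω * t)| (1 / 2) := by
    intro t
    have hnorm : ‖act (Tss ω t) (p • r₁ - q • r₂)‖ = |Real.cos (ω * t)| := by
      rw [EuclideanSpace.norm_eq]
      have h0 : act (Tss ω t) (p • r₁ - q • r₂) 0 = Real.cos (ω * t) := by
        rw [act_apply]
        simp [r₁, r₂, p, q]
        ring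
      have h1 : act (Tss ω t) (p • r₁ - q • r₂) 1 = 0 := by
        rw [act_apply]
        simp [r₁, r₂, p, q]
      have h2 : act (Tss ω t) (p • r₁ - q • r₂) 2 = 0 := by
        rw [act_apply]
        simp [r₁, r₂, p, q]
      rw [Fin.sum_univ_three, h0, h1, h2]
      simp [Real.sqrt_sq_eq_abs, sq_abs]
    have hpq : |p - q| = 1 / 2 := by norm_num [p, q]
    simp only [D]
    rw [hnorm, hpq]
  refine ⟨hD, 4 * Real.pi / 15, 8 * Real.pi / 15, by positivity,
    by have := Real.pi_pos; linarith, ?_, ?_⟩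
  · intro t ht
    obtain ⟨hta, htb⟩ := ht
    have hx1 : Real.pi / 3 ≤ ω * t := by
      simp only [ω]; nlinarith
    have hx2 : ω * t ≤ 2 * Real.pi / 3 := by
      simp only [ω]; nlinarith
    have hx0 : (0:ℝ) ≤ ω * t := le_trans (by positivity) hx1
    have hxpi : ω * t ≤ Real.pi := le_trans hx2 (by linarith [Real.pi_pos])
    have hub : Real.cos (ω * t) ≤ 1 / 2 := by
      calc Real.cos (ω * t) ≤ Real.cos (Real.pi / 3) := by
            apply Real.cos_le_cos_of_nonneg_of_le_pi
            · positivity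
            · exact hxpi
            · exact hx1
        _ = 1 / 2 := Real.cos_pi_div_three
    have hlb : -(1 / 2) ≤ Real.cos (ω * t) := by
      have : Real.cos (2 * Real.pi / 3) ≤ Real.cos (ω * t) := by
        apply Real.cos_le_cos_of_nonneg_of_le_pi
        · exact hx0
        · linarith [Real.pi_pos]
        · exact hx2
      have h23 : Real.cos (2 * Real.pi / 3) = -(1 / 2) := by
        have : (2 : ℝ) * Real.pi / 3 = Real.pi - Real.pi / 3 := by ring
        rw [this, Real.cos_pi_sub, Real.cos_pi_div_three]
      linarith [h23 ▸ this]
    have habs : |Real.cos (ω * t)| ≤ 1 / 2 := abs_le.mpr ⟨hlb, hub⟩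
    rw [hD t, max_eq_right habs]
  · refine ⟨4 * Real.pi / 15, ⟨le_refl _, by have := Real.pi_pos; linarith⟩,
      8 * Real.pi / 15, ⟨by have := Real.pi_pos; linarith, le_refl _⟩, ?_⟩
    intro h
    have h0 := congrArg (fun v => v 0) h
    rw [act_apply, act_apply] at h0
    have e1 : ω * (4 * Real.pi / 15) = Real.pi / 3 := by simp only [ω]; ring
    have e2 : ω * (8 * Real.pi / 15) = 2 * Real.pi / 3 := by simp only [ω]; ring
    have h23 : Real.cos (2 * Real.pi / 3) = -(1 / 2) := by
      have : (2 : ℝ) * Real.pi / 3 = Real.pi - Real.pi / 3 := by ring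
      rw [this, Real.cos_pi_sub, Real.cos_pi_div_three]
    rw [e1, e2] at h0
    simp [r₁, Real.cos_pi_div_three, h23] at h0
    norm_num at h0
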